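/- Let φ ∈ O_K[x] be Eisenstein of degree n with root α, ρ its ramification polynomial, and R its ramification polygon. For λ = m ∈ ℤ_{>0}, let S_m be the residual polynomial of the (−m)-component of R. Then: (a) if R has a segment S of integral slope −m with left endpoint (k, w) and residual polynomial A, then S_m(x) = x^k·A(x); (b) if R has no segment of slope −m, then S_m(x) = x^{p^s}, where 0 ≤ s ≤ v_p(n) is such that v_α(ρ_{p^s}) + p^s·m = min over 0 ≤ r ≤ v_p(n) of (v_α(ρ_{p^r}) + p^r·m); (c) S_m is an additive polynomial (a 𝕂-sum of monomials of the form c·x^{p^t}); (d) the induced map S_m : 𝕂 → 𝕂 is 𝔽_p-linear. -/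

import Mathlib

open Polynomial

namespace RamificationStmt18

variable {K L : Type*} [Field K] [Field L]

def IsEisenstein (v : AddValuation K (WithTop ℤ)) (φ : Polynomial K) : Prop :=
  φ.Monic ∧ (∀ i < φ.natDegree, ((1 : ℤ) : WithTop ℤ) ≤ v (φ.coeff i)) ∧
    v (φ.coeff 0) = ((1 : ℤ) : WithTop ℤ)

/-- Coefficients of the ramification polynomial `ρ(x) = φ(αx+α)/α^n`. -/
noncomputable def rho [Algebra K L] (φ : Polynomial K) (α : L) (n i : ℕ) : L :=
  ∑ k ∈ Finset.Icc i n, (Nat.choose k i : L) * (algebraMap K L (φ.coeff k)) * α ^ ((k : ℤ) - (n : ℤ))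

/-- The valuation ring `O_L = {x | w(x) ≥ 0}`. -/
def vintegers (w : AddValuation L (WithTop ℤ)) : Subring L where
  carrier := {x | 0 ≤ w x}
  zero_mem' := by simp [AddValuation.map_zero]
  one_mem' := by simp [AddValuation.map_one]
  add_mem' := by
    intro a b ha hb
    exact le_trans (le_min ha hb) (w.map_add a b)
  neg_mem' := by
    intro a ha
    simpa [AddValuation.map_neg] using ha
  mul_mem' := by
    intro a b ha hb
    simp only [Set.mem_setOf_eq] at *
    rw [w.map_mul]
    exact add_nonneg ha hb

open scoped Classical in
/-- Reduction modulo the maximal ideal, extended by `0` outside the valuation ring. -/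
noncomputable def vred {𝕜 : Type*} [Field 𝕜] (w : AddValuation L (WithTop ℤ))
    (res : vintegers w →+* 𝕜) (x : L) : 𝕜 :=
  if h : x ∈ vintegers w then res ⟨x, h⟩ else 0

/-- The `α`-content exponent `c = min_{0 ≤ i ≤ n} (v_α(ρ_i) + i·m)` of `ρ(α^m x)`. -/
noncomputable def contExp [Algebra K L] (w : AddValuation L (WithTop ℤ)) (φ : Polynomial K)
    (α : L) (n m : ℕ) : WithTop ℤ :=
  (Finset.range (n + 1)).inf (fun i => w (rho φ α n i) + ((i * m : ℕ) : WithTop ℤ))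

/-- The `α`-content exponent as an integer. -/
noncomputable def contExpZ [Algebra K L] (w : AddValuation L (WithTop ℤ)) (φ : Polynomial K)
    (α : L) (n m : ℕ) : ℤ :=
  WithTop.untopD 0 (contExp w φ α n m)

/-- The residual polynomial `S_m(x) = red(ρ(α^m x)/α^c)` of the `(−m)`-component of the
ramification polygon. -/
noncomputable def SmPoly {𝕜 : Type*} [Field 𝕜] [Algebra K L] (w : AddValuation L (WithTop ℤ))
    (res : vintegers w →+* 𝕜) (φ : Polynomial K) (α : L) (n m : ℕ) : Polynomial 𝕜 :=
  ∑ i ∈ Finset.range (n + 1),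
    Polynomial.C (vred w res (rho φ α n i * α ^ ((i * m : ℤ) - contExpZ w φ α n m))) *
      Polynomial.X ^ i

end RamificationStmt18

namespace Stmt18Aux

lemma nsmul_coe (a : ℕ) (x : ℤ) :
    a • ((x : ℤ) : WithTop ℤ) = (((a : ℤ) * x : ℤ) : WithTop ℤ) := by
  induction a with
  | zero => simp
  | succ a ih =>
    rw [succ_nsmul, ih, ← WithTop.coe_add]
    congr 1
    push_cast
    ring

lemma eq_coe_of_add_coe {x : WithTop ℤ} {b c : ℤ}
    (h : x + (b : WithTop ℤ) = (c : WithTop ℤ)) : x = ((c - b : ℤ) : WithTop ℤ) := by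
  cases x with
  | top => rw [top_add] at h; exact absurd h (by simp)
  | coe a =>
    rw [← WithTop.coe_add, WithTop.coe_eq_coe] at h
    rw [WithTop.coe_eq_coe]
    omega

lemma natcast_withtop (a : ℕ) : ((a : ℕ) : WithTop ℤ) = (((a : ℤ)) : WithTop ℤ) := by
  simp




/-- Lucas-based: `p ∤ C(k-1, p^j - 1)` when `p^j ∣ k`, `k > 0`. -/
lemma not_dvd_choose_pred (p : ℕ) (hp : p.Prime) :
    ∀ (j k : ℕ), 0 < k → p ^ j ∣ k → ¬ p ∣ Nat.choose (k - 1) (p ^ j - 1) := by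
  haveI : Fact p.Prime := ⟨hp⟩
  intro j
  induction j with
  | zero => intro k hk _; simpa using hp.one_lt.ne'
  | succ j ih =>
    intro k hk hdvd hpd
    have hpk : p ∣ k := dvd_trans (dvd_pow_self p (Nat.succ_ne_zero j)) hdvd
    obtain ⟨c, rfl⟩ := hpk
    have hc : 0 < c := Nat.pos_of_ne_zero (by rintro rfl; simp at hk)
    obtain ⟨d, rfl⟩ : ∃ d, c = d + 1 := ⟨c - 1, by omega⟩
    have hp1 := hp.one_lt
    have hq : p * (d + 1) = p * d + p := by ring
    have hmod : (p * (d + 1) - 1) % p = p - 1 := by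
      have e1 : p * (d + 1) - 1 = p * d + (p - 1) := by omega
      rw [e1, Nat.mul_add_mod, Nat.mod_eq_of_lt (by omega)]
    have hdiv : (p * (d + 1) - 1) / p = p * (d + 1) / p - 1 := by
      have e1 : p * (d + 1) - 1 = p * d + (p - 1) := by omega
      rw [e1, Nat.mul_add_div hp.pos, Nat.mul_div_cancel_left _ hp.pos,
        Nat.div_eq_of_lt (by omega)]
      omega
    obtain ⟨e, he⟩ : ∃ e, p ^ j = e + 1 := ⟨p ^ j - 1, by have := Nat.one_le_pow j p hp.pos; omega⟩
    have hqq : p * (e + 1) = p * e + p := by ring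
    have hpow : p ^ (j + 1) = p * e + p := by rw [pow_succ, he]; ring
    have hmod2 : (p ^ (j + 1) - 1) % p = p - 1 := by
      have e1 : p ^ (j + 1) - 1 = p * e + (p - 1) := by omega
      rw [e1, Nat.mul_add_mod, Nat.mod_eq_of_lt (by omega)]
    have hdiv2 : (p ^ (j + 1) - 1) / p = p ^ j - 1 := by
      have e1 : p ^ (j + 1) - 1 = p * e + (p - 1) := by omega
      rw [e1, Nat.mul_add_div hp.pos, Nat.div_eq_of_lt (by omega)]
      omega
    have hlucas := @Choose.choose_modEq_choose_mod_mul_choose_div_nat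
      (p * (d + 1) - 1) (p ^ (j + 1) - 1) p _
    rw [hmod, hdiv, hmod2, hdiv2, Nat.choose_self, one_mul] at hlucas
    have hdvd' : p ^ j ∣ p * (d + 1) / p := by
      rw [Nat.mul_div_cancel_left _ hp.pos]
      obtain ⟨c, hc⟩ := hdvd
      refine ⟨c, ?_⟩
      have : p * (d + 1) = p * (p ^ j * c) := by rw [hc, pow_succ]; ring
      exact Nat.eq_of_mul_eq_mul_left hp.pos this
    have hkp : 0 < p * (d + 1) / p := by
      rw [Nat.mul_div_cancel_left _ hp.pos]; omega
    exact ih (p * (d + 1) / p) hkp hdvd'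
      (Nat.modEq_zero_iff_dvd.mp (hlucas.symm.trans (Nat.modEq_zero_iff_dvd.mpr hpd)))

/-- `v_p(C(k, p^j)) = v_p(k) - j` for `j ≤ v_p(k)`. -/
lemma padicValNat_choose_pow (p : ℕ) (hp : p.Prime) (k j : ℕ) (hk : 0 < k)
    (hj : j ≤ padicValNat p k) :
    padicValNat p (Nat.choose k (p ^ j)) + j = padicValNat p k := by
  haveI : Fact p.Prime := ⟨hp⟩
  have hdvd : p ^ j ∣ k := dvd_trans (pow_dvd_pow p hj) pow_padicValNat_dvd
  have hple : p ^ j ≤ k := Nat.le_of_dvd hk hdvd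
  have hppos : 0 < p ^ j := Nat.pow_pos hp.pos
  -- identity : k * choose (k-1) (p^j - 1) = choose k (p^j) * p^j
  have hid : k * Nat.choose (k - 1) (p ^ j - 1) = Nat.choose k (p ^ j) * p ^ j := by
    have h := Nat.add_one_mul_choose_eq (k - 1) (p ^ j - 1)
    rw [Nat.sub_add_cancel hk,
      Nat.sub_add_cancel hppos] at h
    exact h
  have hc1 : Nat.choose (k - 1) (p ^ j - 1) ≠ 0 :=
    (Nat.choose_pos (by omega)).ne'
  have hc2 : Nat.choose k (p ^ j) ≠ 0 := (Nat.choose_pos hple).ne'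
  have hv := congrArg (padicValNat p) hid
  rw [padicValNat.mul hk.ne' hc1, padicValNat.mul hc2 (by positivity),
    padicValNat.prime_pow, padicValNat.eq_zero_of_not_dvd
      (not_dvd_choose_pred p hp j k hk hdvd)] at hv
  omega

/-- `v_p(k) ≤ v_p(i) + v_p(C(k,i))` for `1 ≤ i ≤ k`. -/
lemma padicValNat_le_choose (p : ℕ) (hp : p.Prime) (k i : ℕ) (hi : 1 ≤ i) (hik : i ≤ k) :
    padicValNat p k ≤ padicValNat p i + padicValNat p (Nat.choose k i) := by
  haveI : Fact p.Prime := ⟨hp⟩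
  have hk : 0 < k := lt_of_lt_of_le hi hik
  have hid : k * Nat.choose (k - 1) (i - 1) = Nat.choose k i * i := by
    have h := Nat.add_one_mul_choose_eq (k - 1) (i - 1)
    rw [Nat.sub_add_cancel hk,
      Nat.sub_add_cancel hi] at h
    exact h
  have hc1 : Nat.choose (k - 1) (i - 1) ≠ 0 := (Nat.choose_pos (by omega)).ne'
  have hc2 : Nat.choose k i ≠ 0 := (Nat.choose_pos hik).ne'
  have hv := congrArg (padicValNat p) hid
  rw [padicValNat.mul hk.ne' hc1, padicValNat.mul hc2 (by omega)] at hv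
  omega

/-- Main combinatorial claim: with `t = min (v_p k) (log_p i)`, we have `p^t ≤ i` and
`v_p (C(k, p^t)) ≤ v_p (C(k, i))`. -/
lemma choose_min_pow (p : ℕ) (hp : p.Prime) (k i : ℕ) (hi : 1 ≤ i) (hik : i ≤ k) :
    p ^ (min (padicValNat p k) (Nat.log p i)) ≤ i ∧
    padicValNat p (Nat.choose k (p ^ (min (padicValNat p k) (Nat.log p i)))) ≤
      padicValNat p (Nat.choose k i) := by
  haveI : Fact p.Prime := ⟨hp⟩
  set u := padicValNat p k with hu
  set s := Nat.log p i with hs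
  have hk : 0 < k := lt_of_lt_of_le hi hik
  have hle1 : p ^ s ≤ i := Nat.pow_log_le_self p (Nat.one_le_iff_ne_zero.mp hi)
  have hmin : p ^ (min u s) ≤ i :=
    le_trans (Nat.pow_le_pow_right hp.pos (min_le_right _ _)) hle1
  refine ⟨hmin, ?_⟩
  rcases le_or_gt u s with h | h
  · rw [min_eq_left h]
    have := padicValNat_choose_pow p hp k u hk le_rfl
    omega
  · rw [min_eq_right h.le]
    have h1 := padicValNat_choose_pow p hp k s hk h.le
    have h2 := padicValNat_le_choose p hp k i hi hik
    have h3 : padicValNat p i ≤ s := by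
      rcases Nat.eq_zero_or_pos (padicValNat p i) with h0 | h0
      · omega
      · have : p ^ padicValNat p i ≤ i := Nat.le_of_dvd hi pow_padicValNat_dvd
        have := Nat.pow_log_le_self p (Nat.one_le_iff_ne_zero.mp hi)
        have := (Nat.le_log_iff_pow_le hp.one_lt (Nat.one_le_iff_ne_zero.mp hi)).mpr this
        exact (Nat.le_log_iff_pow_le hp.one_lt (Nat.one_le_iff_ne_zero.mp hi)).mpr ‹p ^ padicValNat p i ≤ i›
    omega



section Val

variable {K : Type*} [Field K] (v : AddValuation K (WithTop ℤ))

lemma val_nat_nonneg (t : ℕ) : (0 : WithTop ℤ) ≤ v (t : K) := by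
  induction t with
  | zero => simp
  | succ t ih =>
    have h := v.map_add (t : K) 1
    rw [AddValuation.map_one] at h
    push_cast
    exact le_trans (le_min ih le_rfl) h

lemma val_int_nonneg (a : ℤ) : (0 : WithTop ℤ) ≤ v (a : K) := by
  rcases Int.natAbs_eq a with h | h <;> rw [h]
  · rw [Int.cast_natCast]; exact val_nat_nonneg v _
  · rw [Int.cast_neg, Int.cast_natCast, AddValuation.map_neg]; exact val_nat_nonneg v _

lemma val_coprime_eq_zero {p : ℕ} (hp : p.Prime) (hvp : 0 < v (p : K)) {u : ℕ}
    (hu0 : 0 < u) (hu : ¬ p ∣ u) : v (u : K) = 0 := by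
  have hcop : Nat.Coprime u p := Nat.coprime_comm.mp (hp.coprime_iff_not_dvd.mpr hu)
  obtain ⟨a, b, hab⟩ := Nat.isCoprime_iff_coprime.mpr hcop
  have hcast : (a : K) * (u : K) + (b : K) * (p : K) = 1 := by
    have := congrArg (fun z : ℤ => (z : K)) hab
    push_cast at this
    simpa using this
  by_contra hne
  have hpos : 0 < v (u : K) := lt_of_le_of_ne (val_nat_nonneg v u) (Ne.symm hne)
  have h1 : (0 : WithTop ℤ) < v ((a : K) * u) := by
    rw [AddValuation.map_mul]
    exact lt_of_lt_of_le hpos (le_add_of_nonneg_left (val_int_nonneg v a))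
  have h2 : (0 : WithTop ℤ) < v ((b : K) * p) := by
    rw [AddValuation.map_mul]
    exact lt_of_lt_of_le hvp (le_add_of_nonneg_left (val_int_nonneg v b))
  have h3 := v.map_add ((a : K) * u) ((b : K) * p)
  rw [hcast, AddValuation.map_one] at h3
  exact absurd h3 (not_le.mpr (lt_min h1 h2))

lemma val_nat_eq {p : ℕ} (hp : p.Prime) (hvp : 0 < v (p : K)) (t : ℕ) (ht : 0 < t) :
    v (t : K) = (padicValNat p t) • v (p : K) := by
  haveI : Fact p.Prime := ⟨hp⟩
  set e := padicValNat p t with he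
  obtain ⟨u, hu⟩ : p ^ e ∣ t := pow_padicValNat_dvd
  have hu0 : 0 < u := by
    rcases Nat.eq_zero_or_pos u with h | h
    · subst h; simp at hu; omega
    · exact h
  have hnd : ¬ p ∣ u := by
    intro hd
    obtain ⟨c, hc⟩ := hd
    have h2 : t = p ^ (e + 1) * c := by rw [hu, hc, pow_succ]; ring
    exact pow_succ_padicValNat_not_dvd ht.ne' ⟨c, h2⟩
  have hcast : (t : K) = (p : K) ^ e * (u : K) := by rw [hu]; push_cast; ring
  rw [hcast, AddValuation.map_mul, AddValuation.map_pow,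
    val_coprime_eq_zero v hp hvp hu0 hnd, add_zero]

/-- Valuation of a finite sum whose finite-valuation terms have pairwise distinct
valuations equals the min of the valuations. -/
lemma addval_sum_inf {R : Type*} [Ring R] (w : AddValuation R (WithTop ℤ)) {ι : Type*}
    (s : Finset ι) (f : ι → R)
    (h : ∀ a ∈ s, ∀ b ∈ s, a ≠ b → w (f a) ≠ ⊤ → w (f a) ≠ w (f b)) :
    w (∑ x ∈ s, f x) = s.inf fun a => w (f a) := by
  classical
  have hge : s.inf (fun a => w (f a)) ≤ w (∑ x ∈ s, f x) :=
    w.map_le_sum fun i hi => Finset.inf_le hi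
  rcases eq_top_or_lt_top (s.inf fun a => w (f a)) with htop | hlt
  · rw [htop]
    exact le_antisymm le_top (htop ▸ hge)
  · have hne : s.Nonempty := by
      rcases s.eq_empty_or_nonempty with rfl | h'
      · simp at hlt
      · exact h'
    obtain ⟨a0, ha0, hmin⟩ := Finset.exists_mem_eq_inf s hne fun a => w (f a)
    have ha0top : w (f a0) ≠ ⊤ := by rw [← hmin]; exact hlt.ne
    have hrest : w (f a0) < w (∑ x ∈ s.erase a0, f x) := by
      refine w.map_lt_sum ha0top fun b hb => ?_
      have hble : w (f a0) ≤ w (f b) := hmin ▸ Finset.inf_le (Finset.mem_of_mem_erase hb)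
      exact lt_of_le_of_ne hble
        (h a0 ha0 b (Finset.mem_of_mem_erase hb) (Finset.ne_of_mem_erase hb).symm ha0top)
    rw [← Finset.add_sum_erase s f ha0, AddValuation.map_add_eq_of_lt_left w hrest, hmin]

end Val


lemma mem_vintegers {L : Type*} [Field L] (w : AddValuation L (WithTop ℤ)) (x : L) :
    x ∈ RamificationStmt18.vintegers w ↔ 0 ≤ w x := Iff.rfl

end Stmt18Aux

namespace RamificationStmt18

/-- The `k`-th term of the ramification polynomial coefficient `ρ_i`. -/
noncomputable def Tm {K L : Type*} [Field K] [Field L] [Algebra K L] (φ : Polynomial K) (α : L)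
    (n k i : ℕ) : L :=
  (Nat.choose k i : L) * (algebraMap K L (φ.coeff k)) * α ^ ((k : ℤ) - (n : ℤ))

lemma rho_eq_sum {K L : Type*} [Field K] [Field L] [Algebra K L] (φ : Polynomial K) (α : L)
    (n i : ℕ) : rho φ α n i = ∑ k ∈ Finset.Icc i n, Tm φ α n k i := rfl

end RamificationStmt18

open RamificationStmt18 in
/-- Let `φ ∈ O_K[x]` be Eisenstein of degree `n` with root `α`, `ρ` its
ramification polynomial, `R` its ramification polygon, and for `m ∈ ℤ_{>0}` let `S_m` be the
residual polynomial of the `(−m)`-component of `R`.  Then: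
(a) if `R` has a segment of integral slope `−m` with left endpoint `(k, y)` and residual
polynomial `A`, then `S_m(x) = x^k·A(x)`;
(b) if `R` has no segment of slope `−m` then `S_m(x) = x^{p^s}` (up to the unit residue of the
single minimal coefficient) where `s ≤ v_p(n)` is such that `v_α(ρ_{p^s}) + p^s·m` is minimal
among `v_α(ρ_{p^r}) + p^r·m`, `0 ≤ r ≤ v_p(n)`;
(c) `S_m` is an additive polynomial: every monomial has exponent a power of `p`;
(d) the induced map `S_m : 𝕜 → 𝕜` is `𝔽_p`-linear. -/
theorem stmt18 {p : ℕ} (hp : p.Prime) {K L 𝕜 : Type*} [Field K] [CharZero K] [Field L]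
    [Field 𝕜] [Algebra K L]
    (v : AddValuation K (WithTop ℤ)) (π : K) (hπ : v π = ((1 : ℤ) : WithTop ℤ))
    (hresidue_char : 0 < v (p : K)) (hchar𝕜 : (p : 𝕜) = 0)
    (w : AddValuation L (WithTop ℤ))
    (res : vintegers w →+* 𝕜) (hres_surj : Function.Surjective res)
    (hres_ker : ∀ x : vintegers w, res x = 0 ↔ 0 < w (x : L))
    (φ : Polynomial K) (n : ℕ) (hn : 0 < n) (hdeg : φ.natDegree = n)
    (hEis : IsEisenstein v φ)
    (α : L) (hroot : Polynomial.aeval α φ = 0) (hα : w α = ((1 : ℤ) : WithTop ℤ))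
    (hcompat : ∀ x : K, w (algebraMap K L x) = n • v x)
    (m : ℕ) (hm : 0 < m) :
    -- (a): a segment of slope −m contributes `x^k · A(x)`
    (∀ (k len : ℕ) (y : ℤ), 0 < len → k + len ≤ n →
      w (rho φ α n k) = (y : WithTop ℤ) →
      w (rho φ α n (k + len)) = ((y - m * len : ℤ) : WithTop ℤ) →
      (∀ i ≤ n, ∀ c : ℤ, w (rho φ α n i) = (c : WithTop ℤ) →
        y - m * ((i : ℤ) - k) ≤ c) →
      (∀ i < k, ∀ c : ℤ, w (rho φ α n i) = (c : WithTop ℤ) →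
        y - m * ((i : ℤ) - k) < c) →
      (∀ i : ℕ, k + len < i → i ≤ n → ∀ c : ℤ, w (rho φ α n i) = (c : WithTop ℤ) →
        y - m * ((i : ℤ) - k) < c) →
      SmPoly w res φ α n m =
        Polynomial.X ^ k *
          ∑ j ∈ Finset.range (len + 1),
            Polynomial.C (vred w res (rho φ α n (j + k) * α ^ ((j * m : ℤ) - y))) *
              Polynomial.X ^ j) ∧
    -- (b): if the (−m)-component is a single point, `S_m` is a monomial `u·x^{p^s}`
    ((∀ i j : ℕ, i ≤ n → j ≤ n →
        w (rho φ α n i) + ((i * m : ℕ) : WithTop ℤ) = contExp w φ α n m →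
        w (rho φ α n j) + ((j * m : ℕ) : WithTop ℤ) = contExp w φ α n m → i = j) →
      ∀ s : ℕ, s ≤ padicValNat p n →
        (w (rho φ α n (p ^ s)) + ((p ^ s * m : ℕ) : WithTop ℤ) =
          (Finset.range (padicValNat p n + 1)).inf
            (fun r => w (rho φ α n (p ^ r)) + ((p ^ r * m : ℕ) : WithTop ℤ))) →
        ∃ u : 𝕜, u ≠ 0 ∧ SmPoly w res φ α n m = Polynomial.C u * Polynomial.X ^ (p ^ s)) ∧
    -- (c): S_m is an additive polynomial
    (∀ i ∈ (SmPoly w res φ α n m).support, ∃ t : ℕ, i = p ^ t) ∧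
    -- (d): the induced map is 𝔽_p-linear
    ((∀ x y : 𝕜, (SmPoly w res φ α n m).eval (x + y) =
        (SmPoly w res φ α n m).eval x + (SmPoly w res φ α n m).eval y) ∧
      (∀ (k : ℕ) (x : 𝕜), (SmPoly w res φ α n m).eval ((k : 𝕜) * x) =
        (k : 𝕜) * (SmPoly w res φ α n m).eval x)) := by
  classical
  haveI : Fact p.Prime := ⟨hp⟩
  obtain ⟨hmonic, hEcoef, hE0⟩ := hEis
  have hα0 : α ≠ 0 := by
    intro h
    rw [h, AddValuation.map_zero] at hα
    exact (by simp : ((1:ℤ) : WithTop ℤ) ≠ ⊤) hα.symm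
  have hzpow : ∀ z : ℤ, w (α ^ z) = ((z : ℤ) : WithTop ℤ) := by
    have hnat : ∀ a : ℕ, w (α ^ (a : ℤ)) = (((a : ℤ)) : WithTop ℤ) := fun a => by
      rw [zpow_natCast, AddValuation.map_pow, hα, Stmt18Aux.nsmul_coe]
      norm_num
    intro z
    rcases le_or_gt 0 z with hz | hz
    · lift z to ℕ using hz
      exact hnat z
    · have h1 : α ^ z * α ^ (((-z).toNat : ℕ) : ℤ) = 1 := by
        rw [← zpow_add₀ hα0, Int.toNat_of_nonneg (by omega : (0:ℤ) ≤ -z)]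
        simp
      have h2 := congrArg w h1
      rw [AddValuation.map_mul, AddValuation.map_one, hnat] at h2
      have h3 : (0 : WithTop ℤ) = (((0:ℤ)) : WithTop ℤ) := by simp
      rw [h3] at h2
      rw [Stmt18Aux.eq_coe_of_add_coe h2]
      congr 1
      omega
  -- the valuation of p as an integer
  have hvp_ne : v ((p : ℕ) : K) ≠ ⊤ := v.ne_top_iff.mpr (Nat.cast_ne_zero.mpr hp.pos.ne')
  obtain ⟨E, hE⟩ := WithTop.ne_top_iff_exists.mp hvp_ne
  have hE1 : 1 ≤ E := by
    have h1 := hresidue_char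
    rw [← hE] at h1
    have h2 : (0:ℤ) < E := by exact_mod_cast h1
    omega
  -- coefficient valuations
  have hφn : φ.coeff n = 1 := by
    have h1 := hmonic.coeff_natDegree
    rwa [hdeg] at h1
  set g : ℕ → ℤ := fun k => WithTop.untopD 0 (v (φ.coeff k)) with hgdef
  have hg : ∀ k, φ.coeff k ≠ 0 → v (φ.coeff k) = ((g k : ℤ) : WithTop ℤ) := by
    intro k hk
    obtain ⟨a, ha⟩ := WithTop.ne_top_iff_exists.mp (v.ne_top_iff.mpr hk)
    rw [← ha, hgdef]
    simp [← ha]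
  have hgn : g n = 0 := by
    rw [hgdef]
    simp [hφn]
  have hg1 : ∀ k, k < n → φ.coeff k ≠ 0 → 1 ≤ g k := by
    intro k hk hk0
    have h1 := hEcoef k (by rw [hdeg]; exact hk)
    rw [hg k hk0] at h1
    exact_mod_cast h1
  -- term valuations
  have hT : ∀ k i, i ≤ k → k ≤ n → φ.coeff k ≠ 0 → w (Tm φ α n k i) =
      (((n * (padicValNat p (Nat.choose k i)) * E + n * g k + k - n : ℤ)) : WithTop ℤ) := by
    intro k i hik hkn hk0
    have hch : 0 < Nat.choose k i := Nat.choose_pos hik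
    have h1 : ((Nat.choose k i : ℕ) : L) = algebraMap K L ((Nat.choose k i : ℕ) : K) := by
      rw [map_natCast]
    rw [Tm, h1, AddValuation.map_mul, AddValuation.map_mul, hcompat, hcompat, hzpow,
      Stmt18Aux.val_nat_eq v hp hresidue_char _ hch, hg k hk0, ← hE,
      Stmt18Aux.nsmul_coe, Stmt18Aux.nsmul_coe, Stmt18Aux.nsmul_coe,
      ← WithTop.coe_add, ← WithTop.coe_add]
    congr 1
    push_cast
    ring
  have hTzero : ∀ k i, φ.coeff k = 0 → w (Tm φ α n k i) = ⊤ := by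
    intro k i hk
    rw [Tm, hk]
    simp [AddValuation.map_zero]
  have hTne : ∀ k i, w (Tm φ α n k i) ≠ ⊤ → φ.coeff k ≠ 0 := fun k i h hc => h (hTzero k i hc)
  -- the valuation of ρ_i as a min of term valuations
  have hrho_eq : ∀ i, 1 ≤ i → w (rho φ α n i) = (Finset.Icc i n).inf fun k => w (Tm φ α n k i) := by
    intro i hi
    rw [rho_eq_sum]
    apply Stmt18Aux.addval_sum_inf
    intro a ha b hb hab hatop heq
    have ha0 : φ.coeff a ≠ 0 := hTne a i hatop
    have hbtop : w (Tm φ α n b i) ≠ ⊤ := by rw [← heq]; exact hatop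
    have hb0 : φ.coeff b ≠ 0 := hTne b i hbtop
    rw [Finset.mem_Icc] at ha hb
    rw [hT a i ha.1 ha.2 ha0, hT b i hb.1 hb.2 hb0, WithTop.coe_eq_coe] at heq
    have hdvd : (n : ℤ) ∣ ((a : ℤ) - b) :=
      ⟨(padicValNat p (Nat.choose b i) : ℤ) * E + g b -
        ((padicValNat p (Nat.choose a i) : ℤ) * E + g a), by linear_combination heq⟩
    obtain ⟨c, hc⟩ := hdvd
    have h1 : 1 ≤ a := le_trans hi ha.1
    have h2 : 1 ≤ b := le_trans hi hb.1
    rcases lt_trichotomy c 0 with h | h | h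
    · have h4 : (a:ℤ) - b ≤ (n:ℤ) * (-1) := by
        rw [hc]
        exact mul_le_mul_of_nonneg_left (by omega) (by positivity)
      have h5 : (n:ℤ) * (-1) = -n := by ring
      rw [h5] at h4
      omega
    · rw [h, mul_zero] at hc
      exact hab (by omega)
    · have h4 : (n:ℤ) * 1 ≤ (a:ℤ) - b := by
        rw [hc]
        exact mul_le_mul_of_nonneg_left (by omega) (by positivity)
      have h5 : (n:ℤ) * 1 = n := by ring
      rw [h5] at h4
      have := ha.2
      omega
  -- ρ_0 = 0
  have hrho0 : rho φ α n 0 = 0 := by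
    have hsplit : ∀ k : ℕ, α ^ ((k:ℤ) - (n:ℤ)) = α ^ k * (α ^ n)⁻¹ := by
      intro k
      rw [zpow_sub₀ hα0, zpow_natCast, zpow_natCast, div_eq_mul_inv]
    have hicc : Finset.Icc 0 n = Finset.range (n+1) := by
      rw [Finset.range_eq_Ico, Finset.Ico_add_one_right_eq_Icc]
    have h1 : rho φ α n 0 =
        (∑ k ∈ Finset.range (n+1), algebraMap K L (φ.coeff k) * α ^ k) * (α ^ n)⁻¹ := by
      rw [rho_eq_sum, hicc, Finset.sum_mul]
      refine Finset.sum_congr rfl fun k _ => ?_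
      rw [Tm, hsplit k]
      simp [Nat.choose_zero_right]
      ring
    have h2 : (∑ k ∈ Finset.range (n+1), algebraMap K L (φ.coeff k) * α ^ k) = 0 := by
      rw [Polynomial.aeval_eq_sum_range, hdeg] at hroot
      rw [← hroot]
      refine Finset.sum_congr rfl fun k _ => ?_
      rw [Algebra.smul_def]
    rw [h1, h2, zero_mul]
  -- ρ_n = 1
  have hrho_n : rho φ α n n = 1 := by
    rw [rho_eq_sum, Finset.Icc_self, Finset.sum_singleton, Tm]
    simp [Nat.choose_self, hφn]
  have hrho_n_val : w (rho φ α n n) = 0 := by rw [hrho_n, AddValuation.map_one]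
  -- nonnegativity of terms
  have hterm_nonneg : ∀ i k, 1 ≤ i → k ∈ Finset.Icc i n → (0 : WithTop ℤ) ≤ w (Tm φ α n k i) := by
    intro i k hi hk
    rw [Finset.mem_Icc] at hk
    by_cases hk0 : φ.coeff k = 0
    · rw [hTzero k i hk0]; exact le_top
    · rw [hT k i hk.1 hk.2 hk0]
      have hA : (0:ℤ) ≤ (padicValNat p (Nat.choose k i) : ℤ) := by positivity
      have hAE : (0:ℤ) ≤ (n:ℤ) * (padicValNat p (Nat.choose k i)) * E := by
        apply mul_nonneg (mul_nonneg (by positivity) hA) (by omega)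
      have hsc : (0:ℤ) ≤ (n:ℤ) * (padicValNat p (Nat.choose k i)) * E + n * g k + k - n := by
        rcases eq_or_lt_of_le hk.2 with heq | hlt
        · subst heq
          rw [hgn]
          omega
        · have h1 := hg1 k hlt hk0
          have h2 : (n:ℤ) * 1 ≤ (n:ℤ) * g k := by
            apply mul_le_mul_of_nonneg_left h1 (by positivity)
          omega
      exact_mod_cast hsc
  have hrho_nonneg : ∀ i, 1 ≤ i → (0 : WithTop ℤ) ≤ w (rho φ α n i) := by
    intro i hi
    rw [rho_eq_sum]
    exact w.map_le_sum fun k hk => hterm_nonneg i k hi hk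
  -- the valuation of ρ at the p-power index p^ν
  set ν := padicValNat p n with hν
  have hpν_le : p ^ ν ≤ n := Nat.le_of_dvd hn pow_padicValNat_dvd
  have hpν_pos : 1 ≤ p ^ ν := Nat.one_le_pow _ _ hp.pos
  have hrho_pν : w (rho φ α n (p ^ ν)) = 0 := by
    rw [hrho_eq _ hpν_pos]
    apply le_antisymm
    · have hmem : n ∈ Finset.Icc (p ^ ν) n := Finset.mem_Icc.mpr ⟨hpν_le, le_rfl⟩
      refine le_trans (Finset.inf_le (f := fun k => w (Tm φ α n k (p ^ ν))) hmem) (le_of_eq ?_)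
      show w (Tm φ α n n (p ^ ν)) = 0
      rw [hT n (p^ν) hpν_le le_rfl (by rw [hφn]; exact one_ne_zero)]
      have hA : padicValNat p (Nat.choose n (p ^ ν)) = 0 := by
        have := Stmt18Aux.padicValNat_choose_pow p hp n ν hn le_rfl
        omega
      rw [hA, hgn]
      norm_num
    · exact Finset.le_inf fun k hk => hterm_nonneg _ k hpν_pos hk
  -- content exponent basics
  have hcontdef : contExp w φ α n m =
      (Finset.range (n+1)).inf (fun i => w (rho φ α n i) + ((i * m : ℕ) : WithTop ℤ)) := rfl
  have hW_le : ∀ i, i ≤ n →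
      contExp w φ α n m ≤ w (rho φ α n i) + ((i * m : ℕ) : WithTop ℤ) := by
    intro i hi
    rw [hcontdef]
    exact Finset.inf_le (Finset.mem_range.mpr (by omega))
  have hcont_ne : contExp w φ α n m ≠ ⊤ := by
    intro h
    have h1 := hW_le n le_rfl
    rw [h, top_le_iff, hrho_n_val, zero_add] at h1
    exact (by simp : ((n * m : ℕ) : WithTop ℤ) ≠ ⊤) h1
  obtain ⟨cz, hcz⟩ := WithTop.ne_top_iff_exists.mp hcont_ne
  have hczZ : contExpZ w φ α n m = cz := by
    rw [contExpZ, ← hcz]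
    simp
  -- the deep lemma: indices realizing the content exponent are p-powers p^t, t ≤ ν
  have hdeep : ∀ i, i ≤ n → w (rho φ α n i) + ((i * m : ℕ) : WithTop ℤ) = contExp w φ α n m →
      ∃ t, t ≤ ν ∧ i = p ^ t := by
    intro i hin hiW
    have hi1 : 1 ≤ i := by
      by_contra h
      have h0 : i = 0 := by omega
      subst h0
      rw [hrho0, AddValuation.map_zero, top_add] at hiW
      exact hcont_ne hiW.symm
    have hWi_ne : w (rho φ α n i) ≠ ⊤ := by
      intro h
      rw [h, top_add] at hiW
      exact hcont_ne hiW.symm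
    have hile : i ≤ p ^ ν := by
      by_contra hgt
      push_neg at hgt
      have h1 : contExp w φ α n m ≤ ((p ^ ν * m : ℕ) : WithTop ℤ) := by
        have h2 := hW_le (p ^ ν) hpν_le
        rwa [hrho_pν, zero_add] at h2
      have h2 : ((i * m : ℕ) : WithTop ℤ) ≤ w (rho φ α n i) + ((i * m : ℕ) : WithTop ℤ) :=
        le_add_of_nonneg_left (hrho_nonneg i hi1)
      have h3 : ((p ^ ν * m : ℕ) : WithTop ℤ) < ((i * m : ℕ) : WithTop ℤ) := by
        have h4 : p ^ ν * m < i * m := (Nat.mul_lt_mul_right hm).mpr hgt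
        exact_mod_cast h4
      exact lt_irrefl _ (lt_of_le_of_lt h1 (lt_of_lt_of_le h3 (le_trans h2 (le_of_eq hiW))))
    have hrmin := hrho_eq i hi1
    obtain ⟨k0, hk0mem, hk0⟩ := Finset.exists_mem_eq_inf _
      (⟨n, Finset.mem_Icc.mpr ⟨hin, le_rfl⟩⟩ : (Finset.Icc i n).Nonempty)
      (fun k => w (Tm φ α n k i))
    rw [Finset.mem_Icc] at hk0mem
    have hTk0_ne : w (Tm φ α n k0 i) ≠ ⊤ := by
      rw [← hk0, ← hrmin]
      exact hWi_ne
    have hφk0 : φ.coeff k0 ≠ 0 := hTne _ _ hTk0_ne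
    obtain ⟨hple, hvle⟩ := Stmt18Aux.choose_min_pow p hp k0 i hi1 hk0mem.1
    by_cases hii : i = p ^ (min (padicValNat p k0) (Nat.log p i))
    · refine ⟨min (padicValNat p k0) (Nat.log p i), ?_, hii⟩
      have h5 : p ^ (min (padicValNat p k0) (Nat.log p i)) ≤ p ^ ν := hii ▸ hile
      exact (Nat.pow_le_pow_iff_right hp.one_lt).mp h5
    · exfalso
      set t := min (padicValNat p k0) (Nat.log p i) with htdef
      have hi'lt : p ^ t < i := lt_of_le_of_ne hple (fun h => hii h.symm)
      have hi'1 : 1 ≤ p ^ t := Nat.one_le_pow _ _ hp.pos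
      have hi'n : p ^ t ≤ n := le_trans hple hin
      have hmem' : k0 ∈ Finset.Icc (p ^ t) n := Finset.mem_Icc.mpr ⟨le_trans hple hk0mem.1, hk0mem.2⟩
      have h4 : w (rho φ α n (p ^ t)) ≤ w (Tm φ α n k0 (p ^ t)) := by
        rw [hrho_eq _ hi'1]
        exact Finset.inf_le hmem'
      have hTval := hT k0 i hk0mem.1 hk0mem.2 hφk0
      have hTval' := hT k0 (p ^ t) (le_trans hple hk0mem.1) hk0mem.2 hφk0
      have h8 : contExp w φ α n m ≤ w (rho φ α n (p^t)) + ((p ^ t * m : ℕ) : WithTop ℤ) :=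
        hW_le _ hi'n
      have h9 : w (rho φ α n (p^t)) + ((p ^ t * m : ℕ) : WithTop ℤ) ≤
          w (Tm φ α n k0 (p^t)) + ((p ^ t * m : ℕ) : WithTop ℤ) := add_le_add_left h4 _
      have h10 : w (Tm φ α n k0 (p^t)) + ((p ^ t * m : ℕ) : WithTop ℤ) <
          w (Tm φ α n k0 i) + ((i * m : ℕ) : WithTop ℤ) := by
        rw [hTval, hTval', Stmt18Aux.natcast_withtop (p ^ t * m), Stmt18Aux.natcast_withtop (i * m),
          ← WithTop.coe_add, ← WithTop.coe_add, WithTop.coe_lt_coe]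
        have h5 : (padicValNat p (Nat.choose k0 (p ^ t)) : ℤ) ≤
            (padicValNat p (Nat.choose k0 i) : ℤ) := by exact_mod_cast hvle
        have h6 : (n:ℤ) * (padicValNat p (Nat.choose k0 (p^t))) * E ≤
            (n:ℤ) * (padicValNat p (Nat.choose k0 i)) * E := by
          apply mul_le_mul_of_nonneg_right _ (by omega)
          apply mul_le_mul_of_nonneg_left h5 (by positivity)
        have h7 : ((p ^ t * m : ℕ) : ℤ) < ((i * m : ℕ) : ℤ) := by
          have : p ^ t * m < i * m := (Nat.mul_lt_mul_right hm).mpr hi'lt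
          exact_mod_cast this
        linarith [h6, h7]
      have h11 : w (Tm φ α n k0 i) + ((i * m : ℕ) : WithTop ℤ) = contExp w φ α n m := by
        have h12 : w (rho φ α n i) = w (Tm φ α n k0 i) := hrmin.trans hk0
        rw [← h12]
        exact hiW
      exact lt_irrefl _ (((h8.trans h9).trans_lt h10).trans_eq h11)
  -- vred lemmas
  have hvred0 : ∀ x : L, 0 < w x → vred w res x = 0 := by
    intro x hx
    have hmem : x ∈ vintegers w := (Stmt18Aux.mem_vintegers w x).mpr (le_of_lt hx)
    simp only [vred]
    rw [dif_pos hmem]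
    exact (hres_ker ⟨x, hmem⟩).mpr hx
  have hvredne : ∀ x : L, w x = 0 → vred w res x ≠ 0 := by
    intro x hx
    have hmem : x ∈ vintegers w := (Stmt18Aux.mem_vintegers w x).mpr (le_of_eq hx.symm)
    simp only [vred]
    rw [dif_pos hmem]
    intro h
    have h1 := (hres_ker ⟨x, hmem⟩).mp h
    rw [hx] at h1
    exact lt_irrefl _ h1
  -- valuations of the products appearing in SmPoly
  have hprod : ∀ i : ℕ, w (rho φ α n i * α ^ (((i : ℤ) * (m : ℤ)) - contExpZ w φ α n m)) =
      w (rho φ α n i) + ((((i:ℤ) * m - cz : ℤ)) : WithTop ℤ) := by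
    intro i
    rw [AddValuation.map_mul, hzpow, hczZ]
  have hai_zero : ∀ i, i ≤ n →
      w (rho φ α n i) + ((i * m : ℕ) : WithTop ℤ) ≠ contExp w φ α n m →
      vred w res (rho φ α n i * α ^ (((i : ℤ) * (m : ℤ)) - contExpZ w φ α n m)) = 0 := by
    intro i hin hne
    apply hvred0
    rw [hprod i]
    rcases eq_or_ne (w (rho φ α n i)) ⊤ with htop | hne2
    · rw [htop, top_add]
      exact WithTop.coe_lt_top 0
    · obtain ⟨r, hr⟩ := WithTop.ne_top_iff_exists.mp hne2
      have hgt : contExp w φ α n m < w (rho φ α n i) + ((i*m:ℕ) : WithTop ℤ) :=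
        lt_of_le_of_ne (hW_le i hin) (Ne.symm hne)
      rw [← hr, ← hcz, Stmt18Aux.natcast_withtop (i * m), ← WithTop.coe_add,
        WithTop.coe_lt_coe] at hgt
      rw [← hr, ← WithTop.coe_add]
      have h1 : (0:ℤ) < r + ((i:ℤ)*m - cz) := by push_cast at hgt; linarith
      exact_mod_cast h1
  have hai_ne : ∀ i, i ≤ n →
      w (rho φ α n i) + ((i * m : ℕ) : WithTop ℤ) = contExp w φ α n m →
      vred w res (rho φ α n i * α ^ (((i : ℤ) * (m : ℤ)) - contExpZ w φ α n m)) ≠ 0 := by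
    intro i hin heq
    apply hvredne
    rw [hprod i]
    have hne2 : w (rho φ α n i) ≠ ⊤ := by
      intro h
      rw [h, top_add] at heq
      exact hcont_ne heq.symm
    obtain ⟨r, hr⟩ := WithTop.ne_top_iff_exists.mp hne2
    rw [← hr, ← hcz, Stmt18Aux.natcast_withtop (i * m), ← WithTop.coe_add,
      WithTop.coe_eq_coe] at heq
    rw [← hr, ← WithTop.coe_add]
    have h1 : r + ((i:ℤ)*m - cz) = 0 := by push_cast at heq; linarith
    rw [h1]
    rfl
  -- coefficients of SmPoly
  have hcoeff : ∀ q, (SmPoly w res φ α n m).coeff q =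
      if q ∈ Finset.range (n+1) then
        vred w res (rho φ α n q * α ^ (((q : ℤ) * (m : ℤ)) - contExpZ w φ α n m)) else 0 := by
    intro q
    rw [SmPoly, Polynomial.finset_sum_coeff]
    simp only [Polynomial.coeff_C_mul, Polynomial.coeff_X_pow, mul_ite, mul_one, mul_zero]
    rw [Finset.sum_ite_eq (Finset.range (n+1)) q]
  -- part (c)
  have hpartC : ∀ i ∈ (SmPoly w res φ α n m).support, ∃ t : ℕ, i = p ^ t := by
    intro i hi
    rw [Polynomial.mem_support_iff, hcoeff i] at hi
    by_cases hmem : i ∈ Finset.range (n+1)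
    · rw [if_pos hmem] at hi
      have hin : i ≤ n := by
        have := Finset.mem_range.mp hmem
        omega
      by_cases hWc : w (rho φ α n i) + ((i * m : ℕ) : WithTop ℤ) = contExp w φ α n m
      · obtain ⟨t, _, rfl⟩ := hdeep i hin hWc
        exact ⟨t, rfl⟩
      · exact absurd (hai_zero i hin hWc) hi
    · rw [if_neg hmem] at hi
      exact absurd rfl hi
  -- characteristic of 𝕜
  haveI hcharP : CharP 𝕜 p := (CharP.charP_iff_prime_eq_zero hp).mpr hchar𝕜
  -- part (d)
  have hpartD1 : ∀ x y : 𝕜, (SmPoly w res φ α n m).eval (x + y) =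
      (SmPoly w res φ α n m).eval x + (SmPoly w res φ α n m).eval y := by
    intro x y
    rw [Polynomial.eval_eq_sum, Polynomial.eval_eq_sum, Polynomial.eval_eq_sum,
      Polynomial.sum_def, Polynomial.sum_def, Polynomial.sum_def, ← Finset.sum_add_distrib]
    refine Finset.sum_congr rfl fun i hi => ?_
    obtain ⟨t, rfl⟩ := hpartC i hi
    rw [add_pow_char_pow, mul_add]
  have hfrob : ∀ (k t : ℕ), (k : 𝕜) ^ p ^ t = (k : 𝕜) := by
    intro k t
    induction t with
    | zero => simp
    | succ t ih =>
      rw [pow_succ, pow_mul, ih, ← frobenius_def]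
      exact map_natCast (frobenius 𝕜 p) k
  have hpartD2 : ∀ (k : ℕ) (x : 𝕜), (SmPoly w res φ α n m).eval ((k : 𝕜) * x) =
      (k : 𝕜) * (SmPoly w res φ α n m).eval x := by
    intro k x
    rw [Polynomial.eval_eq_sum, Polynomial.eval_eq_sum, Polynomial.sum_def, Polynomial.sum_def,
      Finset.mul_sum]
    refine Finset.sum_congr rfl fun i hi => ?_
    obtain ⟨t, rfl⟩ := hpartC i hi
    rw [mul_pow, hfrob k t]
    ring
  -- part (b)
  have hpartB : (∀ i j : ℕ, i ≤ n → j ≤ n →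
        w (rho φ α n i) + ((i * m : ℕ) : WithTop ℤ) = contExp w φ α n m →
        w (rho φ α n j) + ((j * m : ℕ) : WithTop ℤ) = contExp w φ α n m → i = j) →
      ∀ s : ℕ, s ≤ padicValNat p n →
        (w (rho φ α n (p ^ s)) + ((p ^ s * m : ℕ) : WithTop ℤ) =
          (Finset.range (padicValNat p n + 1)).inf
            (fun r => w (rho φ α n (p ^ r)) + ((p ^ r * m : ℕ) : WithTop ℤ))) →
        ∃ u : 𝕜, u ≠ 0 ∧ SmPoly w res φ α n m = Polynomial.C u * Polynomial.X ^ (p ^ s) := by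
    intro huniq s hs hsmin
    have hps_le : p ^ s ≤ n := le_trans (Nat.pow_le_pow_right hp.pos hs) hpν_le
    obtain ⟨i0, hi0mem, hi0⟩ := Finset.exists_mem_eq_inf (Finset.range (n+1))
      ⟨0, Finset.mem_range.mpr (by omega)⟩
      (fun i => w (rho φ α n i) + ((i * m : ℕ) : WithTop ℤ))
    have hi0n : i0 ≤ n := by
      have := Finset.mem_range.mp hi0mem
      omega
    have hi0W : w (rho φ α n i0) + ((i0 * m : ℕ) : WithTop ℤ) = contExp w φ α n m :=
      (hcontdef.trans hi0).symm
    obtain ⟨t, htν, hti⟩ := hdeep i0 hi0n hi0W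
    rw [hti] at hi0W
    have h1 : w (rho φ α n (p^s)) + ((p^s * m : ℕ) : WithTop ℤ) ≤
        w (rho φ α n (p^t)) + ((p^t * m : ℕ) : WithTop ℤ) := by
      rw [hsmin]
      exact Finset.inf_le (Finset.mem_range.mpr (by omega))
    have h2 : w (rho φ α n (p^s)) + ((p^s * m : ℕ) : WithTop ℤ) = contExp w φ α n m :=
      le_antisymm (h1.trans (le_of_eq hi0W)) (hW_le _ hps_le)
    refine ⟨vred w res (rho φ α n (p^s) * α ^ (((p^s : ℕ) : ℤ) * (m:ℤ) - contExpZ w φ α n m)),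
      hai_ne _ hps_le h2, ?_⟩
    rw [SmPoly]
    refine Finset.sum_eq_single_of_mem (p^s) (Finset.mem_range.mpr (by omega)) ?_
    intro j hj hne
    have hjn : j ≤ n := by
      have := Finset.mem_range.mp hj
      omega
    have hWj : w (rho φ α n j) + ((j * m : ℕ) : WithTop ℤ) ≠ contExp w φ α n m :=
      fun hEq => hne (huniq j (p^s) hjn hps_le hEq h2)
    rw [hai_zero j hjn hWj, map_zero, zero_mul]
  -- part (a)
  have hpartA : ∀ (k len : ℕ) (y : ℤ), 0 < len → k + len ≤ n →
      w (rho φ α n k) = (y : WithTop ℤ) →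
      w (rho φ α n (k + len)) = ((y - m * len : ℤ) : WithTop ℤ) →
      (∀ i ≤ n, ∀ c : ℤ, w (rho φ α n i) = (c : WithTop ℤ) → y - m * ((i : ℤ) - k) ≤ c) →
      (∀ i < k, ∀ c : ℤ, w (rho φ α n i) = (c : WithTop ℤ) → y - m * ((i : ℤ) - k) < c) →
      (∀ i : ℕ, k + len < i → i ≤ n → ∀ c : ℤ, w (rho φ α n i) = (c : WithTop ℤ) →
        y - m * ((i : ℤ) - k) < c) →
      SmPoly w res φ α n m = Polynomial.X ^ k * ∑ j ∈ Finset.range (len + 1),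
        Polynomial.C (vred w res (rho φ α n (j + k) * α ^ ((j * m : ℤ) - y))) *
        Polynomial.X ^ j := by
    intro k len y hlen hkn hwk hwkl hminh hleft hright
    have hcy : contExp w φ α n m = ((y + k * m : ℤ) : WithTop ℤ) := by
      apply le_antisymm
      · have h1 := hW_le k (by omega)
        rw [hwk] at h1
        refine h1.trans (le_of_eq ?_)
        rw [Stmt18Aux.natcast_withtop (k*m), ← WithTop.coe_add, WithTop.coe_eq_coe]
        push_cast
        ring
      · rw [hcontdef]
        apply Finset.le_inf
        intro i hi
        have hin : i ≤ n := by
          have := Finset.mem_range.mp hi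
          omega
        rcases eq_or_ne (w (rho φ α n i)) ⊤ with htop | hne2
        · rw [htop, top_add]
          exact le_top
        · obtain ⟨r, hr⟩ := WithTop.ne_top_iff_exists.mp hne2
          have h3 := hminh i hin r hr.symm
          rw [← hr, Stmt18Aux.natcast_withtop (i*m), ← WithTop.coe_add, WithTop.coe_le_coe]
          push_cast
          linarith
    have hczy : cz = y + k * m := by
      have h4 := hcz.trans hcy
      exact_mod_cast h4
    rw [SmPoly]
    have hsub : Finset.Icc k (k + len) ⊆ Finset.range (n+1) := by
      intro x hx
      rw [Finset.mem_Icc] at hx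
      exact Finset.mem_range.mpr (by omega)
    rw [← Finset.sum_subset hsub]
    · have hicc : Finset.Icc k (k + len) = Finset.Ico k (k + len + 1) := by
        rw [Finset.Ico_add_one_right_eq_Icc]
      rw [hicc, Finset.sum_Ico_eq_sum_range]
      have hlen1 : k + len + 1 - k = len + 1 := by omega
      rw [hlen1, Finset.mul_sum]
      refine Finset.sum_congr rfl fun j hj => ?_
      have hexp : rho φ α n (k + j) * α ^ (((k + j : ℕ) : ℤ) * (m:ℤ) - contExpZ w φ α n m) =
          rho φ α n (j + k) * α ^ (((j:ℤ) * (m:ℤ)) - y) := by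
        rw [hczZ, hczy]
        congr 1
        · rw [add_comm]
        · congr 1
          push_cast
          ring
      rw [hexp, pow_add]
      ring
    · intro i hi hnotin
      have hin : i ≤ n := by
        have := Finset.mem_range.mp hi
        omega
      rw [Finset.mem_Icc] at hnotin
      push_neg at hnotin
      have hzero : vred w res (rho φ α n i * α ^ ((i:ℤ) * (m:ℤ) - contExpZ w φ α n m)) = 0 := by
        apply hvred0
        rw [hprod i]
        rcases eq_or_ne (w (rho φ α n i)) ⊤ with htop | hne2
        · rw [htop, top_add]
          exact WithTop.coe_lt_top 0
        · obtain ⟨r, hr⟩ := WithTop.ne_top_iff_exists.mp hne2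
          have hstrict : y - m * ((i:ℤ) - k) < r := by
            rcases lt_or_ge i k with hik | hik
            · exact hleft i hik r hr.symm
            · exact hright i (hnotin hik) hin r hr.symm
          rw [← hr, ← WithTop.coe_add]
          have h5 : (0:ℤ) < r + ((i:ℤ)*m - cz) := by
            rw [hczy]
            linarith
          exact_mod_cast h5
      rw [hzero, map_zero, zero_mul]
  exact ⟨hpartA, hpartB, hpartC, hpartD1, hpartD2⟩
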